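/- If r ≥ B/2 with B a positive integer, then lim_{m→∞} (log |W(m, ⌊r·m⌋, B)|) / m = log(B + 1). -/

import Mathlib

open Filter Finset

lemma count_W (m L B : ℕ) :
    Nat.card {x : Fin m → ℕ // (∑ i, x i ≤ L) ∧ ∀ i, x i ≤ B} =
    ((Fintype.piFinset fun _ : Fin m => Finset.range (B+1)).filter
      (fun x => ∑ i, x i ≤ L)).card := by
  rw [← Nat.card_eq_finsetCard]
  refine Nat.card_congr (Equiv.subtypeEquivRight ?_)
  intro x
  simp [Fintype.mem_piFinset, Nat.lt_succ_iff, and_comm]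

lemma key_bounds (m L B : ℕ) (hL : B * m / 2 ≤ L) :
    Nat.card {x : Fin m → ℕ // (∑ i, x i ≤ L) ∧ ∀ i, x i ≤ B} ≤ (B+1)^m ∧
    (B+1)^m ≤ 2 * Nat.card {x : Fin m → ℕ // (∑ i, x i ≤ L) ∧ ∀ i, x i ≤ B} := by
  rw [count_W]
  set F : Finset (Fin m → ℕ) := Fintype.piFinset fun _ : Fin m => Finset.range (B+1) with hF
  set A : Finset (Fin m → ℕ) := F.filter (fun x => ∑ i, x i ≤ L) with hA
  have hFcard : F.card = (B+1)^m := by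
    simp [hF, Fintype.card_piFinset]
  have hsub : A ⊆ F := filter_subset _ _
  constructor
  · rw [← hFcard]; exact card_le_card hsub
  · -- injection from F \ A into A
    have hinj : (F \ A).card ≤ A.card := by
      apply Finset.card_le_card_of_injOn (fun x i => B - x i)
      · intro x hx
        simp only [mem_coe, Finset.mem_sdiff, hA, mem_filter, not_and, not_le] at hx
        obtain ⟨hxF, hxs⟩ := hx
        have hxs' := hxs hxF
        have hxb : ∀ i, x i ≤ B := by
          intro i
          have := (Fintype.mem_piFinset.mp hxF) i
          simpa [Nat.lt_succ_iff] using this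
        have hsum : ∑ i, (B - x i) + ∑ i, x i = B * m := by
          rw [← Finset.sum_add_distrib]
          have h : ∀ i : Fin m, (B - x i) + x i = B := fun i => by
            have := hxb i; omega
          simp [h, mul_comm]
        have hsumx : ∑ i, x i ≤ B * m := by
          calc ∑ i, x i ≤ ∑ _i : Fin m, B := Finset.sum_le_sum (fun i _ => hxb i)
          _ = B * m := by simp [mul_comm]
        simp only [mem_coe, hA, mem_filter]
        constructor
        · exact Fintype.mem_piFinset.mpr fun i => by
            simp [Nat.lt_succ_iff]
        · omega
      · intro x hx y hy hxy
        funext i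
        simp only [mem_coe, Finset.mem_sdiff] at hx hy
        have hxb : x i ≤ B := by
          have := (Fintype.mem_piFinset.mp hx.1) i
          simpa [Nat.lt_succ_iff] using this
        have hyb : y i ≤ B := by
          have := (Fintype.mem_piFinset.mp hy.1) i
          simpa [Nat.lt_succ_iff] using this
        have := congrFun hxy i
        simp only at this
        omega
    have := Finset.card_sdiff_add_card_eq_card hsub
    omega

theorem stmt_4 (B : ℕ) (hB : 0 < B) (r : ℝ) (hr : (B : ℝ) / 2 ≤ r) :
    Tendsto (fun m : ℕ =>
        Real.log (Nat.card {x : Fin m → ℕ //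
          (∑ i, x i ≤ ⌊r * m⌋₊) ∧ ∀ i, x i ≤ B}) / m)
      atTop (nhds (Real.log (B + 1))) := by
  set N : ℕ → ℕ := fun m => Nat.card {x : Fin m → ℕ //
      (∑ i, x i ≤ ⌊r * m⌋₊) ∧ ∀ i, x i ≤ B} with hN
  have hbounds : ∀ m : ℕ, N m ≤ (B+1)^m ∧ (B+1)^m ≤ 2 * N m := by
    intro m
    apply key_bounds
    have h1 : ((B * m : ℕ) : ℝ) / 2 ≤ r * m := by
      push_cast
      have hm0 : (0:ℝ) ≤ m := Nat.cast_nonneg m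
      nlinarith
    apply Nat.le_floor
    calc ((B * m / 2 : ℕ) : ℝ) ≤ ((B * m : ℕ) : ℝ) / ((2 : ℕ) : ℝ) := Nat.cast_div_le
      _ = ((B * m : ℕ) : ℝ) / 2 := by norm_num
      _ ≤ r * m := h1
  have hNpos : ∀ m : ℕ, 0 < N m := by
    intro m
    have := (hbounds m).2
    have hp : 0 < (B+1)^m := Nat.pow_pos (by omega)
    omega
  -- squeeze
  have hB1 : (1:ℝ) ≤ (B:ℝ) + 1 := by
    have := Nat.cast_nonneg (α := ℝ) B; linarith
  have hupper : ∀ m : ℕ, Real.log (N m) / m ≤ Real.log (B + 1) := by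
    intro m
    rcases Nat.eq_zero_or_pos m with hm | hm
    · simp [hm]
      exact Real.log_nonneg hB1
    have hmR : (0:ℝ) < m := by exact_mod_cast hm
    have h1 : Real.log (N m) ≤ Real.log ((B+1:ℝ)^m) := by
      apply Real.log_le_log (by exact_mod_cast hNpos m)
      exact_mod_cast (hbounds m).1
    rw [Real.log_pow] at h1
    rw [div_le_iff₀ hmR]
    linarith [h1]
  have hlower : ∀ m : ℕ, 1 ≤ m →
      Real.log (B + 1) - Real.log 2 / m ≤ Real.log (N m) / m := by
    intro m hm
    have hmR : (0:ℝ) < m := by exact_mod_cast hm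
    have h1 : Real.log ((B+1:ℝ)^m) ≤ Real.log (2 * N m) := by
      apply Real.log_le_log (by positivity)
      have := (hbounds m).2
      exact_mod_cast this
    rw [Real.log_pow, Real.log_mul (by norm_num) (by exact_mod_cast (hNpos m).ne')] at h1
    rw [sub_le_iff_le_add, ← add_div, le_div_iff₀ hmR]
    linarith [h1]
  apply tendsto_of_tendsto_of_tendsto_of_le_of_le'
    (g := fun m : ℕ => Real.log (B + 1) - Real.log 2 / m)
    (h := fun _ : ℕ => Real.log (B + 1))
  · have : Tendsto (fun m : ℕ => Real.log 2 / m) atTop (nhds 0) :=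
      tendsto_const_div_atTop_nhds_zero_nat _
    simpa using tendsto_const_nhds.sub this
  · exact tendsto_const_nhds
  · filter_upwards [eventually_ge_atTop 1] with m hm using hlower m hm
  · filter_upwards with m using hupper m
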